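/- arXiv:2203.12791 — 2 statements merged into one kernel-verified Lean document; each statement's English description precedes it below -/
import Mathlib

section
/- Let χ be the non-principal Dirichlet character mod 4. Assume that the partial sums ∑_{p ≤ x} log(1 − χ(p)/√p)^{-1} remain bounded as x → ∞ (a consequence of the Deep Riemann Hypothesis for L(s,χ)). Then ∑_{p ≤ x} χ(p)/√p = −(1/2)·log log x + O(1) as x → ∞. -/
/-- The non-principal Dirichlet character mod 4, as a function on ℕ. -/
noncomputable def chiFour (n : ℕ) : ℝ :=
  if n % 4 = 1 then 1 else if n % 4 = 3 then -1 else 0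

open Finset Real


noncomputable def Tsum : ℝ := ∑' n : ℕ, 1 / (n : ℝ) ^ ((3:ℝ)/2)

lemma sum_rfunc_le (s : Finset ℕ) : ∑ n ∈ s, 1 / (n : ℝ) ^ ((3:ℝ)/2) ≤ Tsum :=
  Summable.sum_le_tsum s (fun n _ => by positivity)
    (Real.summable_one_div_nat_rpow.mpr (by norm_num))

lemma rpow_32 (n : ℕ) : (n : ℝ) ^ ((3:ℝ)/2) = (n : ℝ) * Real.sqrt n := by
  rcases Nat.eq_zero_or_pos n with h | h
  · subst h; rw [Nat.cast_zero, Real.zero_rpow (by norm_num), Real.sqrt_zero, mul_zero]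
  · have h0 : (0:ℝ) < n := by exact_mod_cast h
    have : ((3:ℝ)/2) = 1 + 1/2 := by norm_num
    rw [this, Real.rpow_add h0, Real.rpow_one, Real.sqrt_eq_rpow]

lemma log_le_two_sqrt {x : ℝ} (hx : 1 ≤ x) : Real.log x ≤ 2 * Real.sqrt x := by
  have h0 : 0 < Real.sqrt x := Real.sqrt_pos.mpr (by linarith)
  have := Real.log_le_sub_one_of_pos h0
  have hs : Real.log (Real.sqrt x) = Real.log x / 2 := Real.log_sqrt (by linarith)
  nlinarith [Real.sqrt_nonneg x]

lemma chebyshev (N : ℕ) :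
    ∑ p ∈ (Finset.range (N+1)).filter Nat.Prime, Real.log p ≤ N * Real.log 4 := by
  have h1 : ∑ p ∈ (Finset.range (N+1)).filter Nat.Prime, Real.log p
      = Real.log (primorial N) := by
    rw [primorial, Nat.cast_prod, Real.log_prod]
    intro p hp
    have := (Finset.mem_filter.mp hp).2
    exact_mod_cast this.pos.ne'
  rw [h1]
  calc Real.log (primorial N) ≤ Real.log (4 ^ N) := by
        apply Real.log_le_log (by exact_mod_cast primorial_pos N)
        exact_mod_cast primorial_le_4_pow N
    _ = N * Real.log 4 := by rw [Real.log_pow]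

lemma stirling_lower (N : ℕ) (hN : 1 ≤ N) :
    (N:ℝ) * Real.log N - N ≤ Real.log (Nat.factorial N : ℝ) := by
  have key : (N:ℝ) ^ N / ((Nat.factorial N : ℕ) : ℝ) ≤ Real.exp N := by
    calc (N:ℝ) ^ N / ((Nat.factorial N : ℕ) : ℝ) ≤ ∑ i ∈ range (N+1), (N:ℝ) ^ i / (Nat.factorial i : ℝ) := by
          refine Finset.single_le_sum (f := fun i => (N:ℝ)^i / ((Nat.factorial i : ℕ):ℝ)) ?_ (by simp)
          intro i _; positivity
      _ ≤ Real.exp N := Real.sum_le_exp_of_nonneg (by positivity) _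
  have hfp : (0:ℝ) < ((Nat.factorial N : ℕ) : ℝ) := by exact_mod_cast N.factorial_pos
  have hNp : (0:ℝ) < (N:ℝ) := by exact_mod_cast hN
  have h2 : (N:ℝ) ^ N ≤ ((Nat.factorial N : ℕ) : ℝ) * Real.exp N := by
    rw [div_le_iff₀ hfp] at key; linarith [key]
  have := Real.log_le_log (by positivity) h2
  rw [Real.log_pow, Real.log_mul hfp.ne' (Real.exp_ne_zero N), Real.log_exp] at this
  linarith

lemma stirling_upper (N : ℕ) : Real.log (Nat.factorial N : ℝ) ≤ (N:ℝ) * Real.log N := by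
  have : ((Nat.factorial N : ℕ) : ℝ) ≤ (N:ℝ) ^ N := by exact_mod_cast Nat.factorial_le_pow N
  have h := Real.log_le_log (by exact_mod_cast N.factorial_pos) this
  rwa [Real.log_pow] at h

/-- Legendre identity for log N!. -/
lemma log_factorial_eq (N : ℕ) :
    Real.log (Nat.factorial N : ℝ) =
      ∑ p ∈ (Finset.range (N+1)).filter Nat.Prime,
        ((Nat.factorial N).factorization p : ℝ) * Real.log p := by
  have hne : Nat.factorial N ≠ 0 := (Nat.factorial_pos N).ne'
  have hprod : (Nat.factorial N : ℕ) =
      ∏ p ∈ (Finset.range (N+1)).filter Nat.Prime, p ^ ((Nat.factorial N).factorization p) := by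
    conv_lhs => rw [← Nat.factorization_prod_pow_eq_self hne]
    rw [Finsupp.prod]
    refine Finset.prod_subset ?_ ?_
    · intro p hp
      rw [Nat.support_factorization] at hp
      obtain ⟨hp1, hp2, _⟩ := Nat.mem_primeFactors.mp hp
      refine Finset.mem_filter.mpr ⟨Finset.mem_range.mpr ?_, hp1⟩
      have := (Nat.Prime.dvd_factorial hp1).mp hp2
      omega
    · intro p _ hp
      rw [Finsupp.notMem_support_iff.mp hp, pow_zero]
  conv_lhs => rw [hprod]
  push_cast
  rw [Real.log_prod]
  · refine Finset.sum_congr rfl fun p hp => ?_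
    rw [Real.log_pow]
  · intro p hp
    have hpp := (Finset.mem_filter.mp hp).2
    have : (0:ℝ) < (p:ℝ) ^ ((Nat.factorial N).factorization p) := by
      have : (0:ℝ) < p := by exact_mod_cast hpp.pos
      positivity
    exact this.ne'

lemma factorization_lower (N p : ℕ) (hp : p.Prime) (hpN : p ≤ N) :
    (N:ℝ)/p - 1 ≤ ((Nat.factorial N).factorization p : ℝ) := by
  haveI : Fact p.Prime := ⟨hp⟩
  rw [Nat.factorization_def _ hp,
    padicValNat_factorial (b := Nat.log p N + 1) (Nat.lt_succ_self _)]
  have h1 : 1 ∈ Finset.Ico 1 (Nat.log p N + 1) := by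
    rw [Finset.mem_Ico]
    exact ⟨le_refl 1, by have := Nat.log_pos hp.one_lt hpN; omega⟩
  have h2 : N / p ^ 1 ≤ ∑ i ∈ Finset.Ico 1 (Nat.log p N + 1), N / p ^ i :=
    Finset.single_le_sum (f := fun i => N / p ^ i) (fun i _ => Nat.zero_le _) h1
  have h3 : ((N / p : ℕ) : ℝ) ≤ (∑ i ∈ Finset.Ico 1 (Nat.log p N + 1), N / p ^ i : ℕ) := by
    exact_mod_cast (by simpa using h2)
  refine le_trans ?_ h3
  have hplt : N < (N / p + 1) * p := (Nat.div_lt_iff_lt_mul hp.pos).mp (Nat.lt_succ_self _)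
  have hpr : (0:ℝ) < p := by exact_mod_cast hp.pos
  have : (N:ℝ) < ((N / p : ℕ) + 1) * p := by exact_mod_cast hplt
  rw [div_sub_one hpr.ne', div_le_iff₀ hpr]
  nlinarith

lemma factorization_upper (N p : ℕ) (hp : p.Prime) :
    ((Nat.factorial N).factorization p : ℝ) ≤ (N:ℝ) / ((p:ℝ) - 1) := by
  haveI : Fact p.Prime := ⟨hp⟩
  have hpr : (1:ℝ) < p := by exact_mod_cast hp.one_lt
  rw [Nat.factorization_def _ hp,
    padicValNat_factorial (b := Nat.log p N + 1) (Nat.lt_succ_self _)]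
  push_cast
  calc ∑ i ∈ Finset.Ico 1 (Nat.log p N + 1), ((N / p ^ i : ℕ) : ℝ)
      ≤ ∑ i ∈ Finset.Ico 1 (Nat.log p N + 1), (N:ℝ) * (1/p) ^ i := by
        refine Finset.sum_le_sum fun i _ => ?_
        rw [div_pow, one_pow, mul_one_div]
        have h := Nat.cast_div_le (m := N) (n := p ^ i) (α := ℝ)
        push_cast at h ⊢
        exact h
    _ = (N:ℝ) * ∑ i ∈ Finset.Ico 1 (Nat.log p N + 1), (1/(p:ℝ)) ^ i := by
        rw [Finset.mul_sum]
    _ ≤ (N:ℝ) * ((1/(p:ℝ)) ^ 1 / (1 - 1/p)) := by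
        refine mul_le_mul_of_nonneg_left
          (geom_sum_Ico_le_of_lt_one (by positivity) (by rw [div_lt_iff₀ (by linarith)]; linarith)) (by positivity)
    _ = (N:ℝ) / ((p:ℝ) - 1) := by
        rw [pow_one]; field_simp

lemma Tsum_nonneg : 0 ≤ Tsum := le_trans (by simp) (sum_rfunc_le ∅)

lemma mertens1 (N : ℕ) (hN : 2 ≤ N) :
    |(∑ p ∈ (Finset.range (N+1)).filter Nat.Prime, Real.log p / p) - Real.log N|
      ≤ 1 + Real.log 4 + 4 * Tsum := by
  have hNr : (2:ℝ) ≤ (N:ℝ) := by exact_mod_cast hN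
  have hN0 : (0:ℝ) < N := by linarith
  set P := (Finset.range (N+1)).filter Nat.Prime with hP
  have hmem : ∀ p ∈ P, p.Prime ∧ p ≤ N := by
    intro p hp
    obtain ⟨h1, h2⟩ := Finset.mem_filter.mp hp
    exact ⟨h2, by have := Finset.mem_range.mp h1; omega⟩
  set A := ∑ p ∈ P, Real.log p / p with hA
  have hθ := chebyshev N
  have hlow : (N:ℝ) * A - (N:ℝ) * Real.log 4 ≤ Real.log (Nat.factorial N : ℝ) := by
    rw [log_factorial_eq N]
    have key : (N:ℝ) * A - ∑ p ∈ P, Real.log p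
        ≤ ∑ p ∈ P, ((Nat.factorial N).factorization p : ℝ) * Real.log p := by
      rw [hA, Finset.mul_sum, ← Finset.sum_sub_distrib]
      refine Finset.sum_le_sum fun p hp => ?_
      obtain ⟨hpp, hpN⟩ := hmem p hp
      have hlg : 0 ≤ Real.log p := Real.log_nonneg (by exact_mod_cast hpp.one_lt.le)
      have hfl := factorization_lower N p hpp hpN
      have hfrm : (N:ℝ) * (Real.log p / p) - Real.log p = ((N:ℝ)/p - 1) * Real.log p := by
        ring
      rw [hfrm]
      exact mul_le_mul_of_nonneg_right hfl hlg
    have : ∑ p ∈ P, Real.log p ≤ (N:ℝ) * Real.log 4 := hθ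
    linarith
  have hDterm : ∀ p ∈ P, Real.log p / ((p:ℝ) * ((p:ℝ) - 1)) ≤ 4 * (1 / (p:ℝ) ^ ((3:ℝ)/2)) := by
    intro p hp
    obtain ⟨hpp, _⟩ := hmem p hp
    have hp2 : (2:ℝ) ≤ (p:ℝ) := by exact_mod_cast hpp.two_le
    have hs2 : Real.sqrt p ^ 2 = p := Real.sq_sqrt (by linarith)
    have hs0 : 0 < Real.sqrt p := Real.sqrt_pos.mpr (by linarith)
    have hlog : Real.log p ≤ 2 * Real.sqrt p := log_le_two_sqrt (by linarith)
    rw [rpow_32, mul_one_div]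
    rw [div_le_div_iff₀ (by nlinarith) (by nlinarith)]
    nlinarith [mul_le_mul_of_nonneg_right hlog
      (show (0:ℝ) ≤ (p:ℝ) * Real.sqrt p by positivity), hs2, hp2, hs0]
  have hD : ∑ p ∈ P, Real.log p / ((p:ℝ) * ((p:ℝ) - 1)) ≤ 4 * Tsum := by
    calc ∑ p ∈ P, Real.log p / ((p:ℝ) * ((p:ℝ) - 1))
        ≤ ∑ p ∈ P, 4 * (1 / (p:ℝ) ^ ((3:ℝ)/2)) := Finset.sum_le_sum hDterm
      _ = 4 * ∑ p ∈ P, (1 / (p:ℝ) ^ ((3:ℝ)/2)) := (Finset.mul_sum _ _ _).symm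
      _ ≤ 4 * Tsum := by nlinarith [sum_rfunc_le P]
  have hupp : Real.log (Nat.factorial N : ℝ) ≤ (N:ℝ) * A + (N:ℝ) * (4 * Tsum) := by
    rw [log_factorial_eq N]
    have key : ∑ p ∈ P, ((Nat.factorial N).factorization p : ℝ) * Real.log p
        ≤ ∑ p ∈ P, ((N:ℝ) * (Real.log p / p) + (N:ℝ) * (Real.log p / ((p:ℝ) * ((p:ℝ) - 1)))) := by
      refine Finset.sum_le_sum fun p hp => ?_
      obtain ⟨hpp, _⟩ := hmem p hp
      have h1 : (1:ℝ) < p := by exact_mod_cast hpp.one_lt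
      have hlg : 0 ≤ Real.log p := Real.log_nonneg (by linarith)
      have hfu := factorization_upper N p hpp
      refine (mul_le_mul_of_nonneg_right hfu hlg).trans (le_of_eq ?_)
      have hp0 : (p:ℝ) ≠ 0 := by linarith
      have hp1 : (p:ℝ) - 1 ≠ 0 := by linarith
      field_simp
      ring
    rw [Finset.sum_add_distrib, ← Finset.mul_sum, ← Finset.mul_sum] at key
    have hND : (N:ℝ) * (∑ p ∈ P, Real.log p / ((p:ℝ) * ((p:ℝ) - 1))) ≤ (N:ℝ) * (4 * Tsum) :=
      mul_le_mul_of_nonneg_left hD (by linarith)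
    linarith
  have hsl := stirling_lower N (by omega)
  have hsu := stirling_upper N
  have hl4 : 0 ≤ Real.log 4 := Real.log_nonneg (by norm_num)
  have hT := Tsum_nonneg
  rw [abs_le]
  constructor
  · have h' : (N:ℝ) * (Real.log N - 1 - 4*Tsum) ≤ (N:ℝ) * A := by nlinarith
    have := (mul_le_mul_iff_of_pos_left hN0).mp h'
    linarith
  · have h' : (N:ℝ) * A ≤ (N:ℝ) * (Real.log N + Real.log 4) := by nlinarith
    have := (mul_le_mul_iff_of_pos_left hN0).mp h'
    linarith

noncomputable def MC1 : ℝ := 1 + Real.log 4 + 4 * Tsum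

lemma MC1_nonneg : 0 ≤ MC1 := by
  have := Tsum_nonneg
  have : (0:ℝ) ≤ Real.log 4 := Real.log_nonneg (by norm_num)
  unfold MC1
  nlinarith [Tsum_nonneg]

noncomputable def mf (n : ℕ) : ℝ := (Real.log n)⁻¹
noncomputable def ma (n : ℕ) : ℝ := if n.Prime then Real.log n / n else 0
noncomputable def mA (n : ℕ) : ℝ := ∑ i ∈ Finset.range (n+1), ma i
noncomputable def mF (n : ℕ) : ℝ := Real.log (Real.log n)

lemma tele (F : ℕ → ℝ) {m n : ℕ} (h : m ≤ n) :
    ∑ i ∈ Finset.Ico m n, (F (i+1) - F i) = F n - F m := by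
  rw [Finset.sum_Ico_eq_sub _ h, Finset.sum_range_sub F, Finset.sum_range_sub F]
  ring

lemma mA_eq (n : ℕ) :
    mA n = ∑ p ∈ (Finset.range (n+1)).filter Nat.Prime, Real.log p / p := by
  rw [mA, Finset.sum_filter]
  exact Finset.sum_congr rfl fun i _ => rfl

lemma mE_bound {i : ℕ} (hi : 2 ≤ i) : |mA i - Real.log i| ≤ MC1 := by
  rw [mA_eq]
  unfold MC1
  exact mertens1 i hi

lemma log_pos_of_two {i : ℕ} (hi : 2 ≤ i) : 0 < Real.log i :=
  Real.log_pos (by exact_mod_cast hi)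

lemma mf_facts {i : ℕ} (hi : 2 ≤ i) :
    0 ≤ mf i - mf (i+1) ∧ mf i ≤ (Real.log 2)⁻¹ := by
  have hL : 0 < Real.log i := log_pos_of_two hi
  have hM : 0 < Real.log (i+1) := by
    have : 0 < Real.log ((i:ℕ)+1 : ℕ) := log_pos_of_two (by omega)
    simpa using this
  have hLM : Real.log i ≤ Real.log (i+1) := by
    apply Real.log_le_log (by positivity)
    push_cast; linarith
  have h2 : Real.log 2 ≤ Real.log i := by
    apply Real.log_le_log (by norm_num)
    exact_mod_cast hi
  constructor
  · rw [mf, mf, sub_nonneg]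
    push_cast
    exact inv_anti₀ hL hLM
  · rw [mf]
    exact inv_anti₀ (Real.log_pos one_lt_two) h2

lemma key1 {i : ℕ} (hi : 2 ≤ i) :
    (mf i - mf (i+1)) * Real.log i ≤ mF (i+1) - mF i := by
  set L := Real.log i with hLd
  have hM' : Real.log ((i:ℕ)+1 : ℕ) = Real.log ((i:ℝ)+1) := by push_cast; rfl
  set M := Real.log ((i:ℝ)+1) with hMd
  have hL : 0 < L := log_pos_of_two hi
  have hM : 0 < M := by
    rw [hMd]
    apply Real.log_pos
    have h2i : (2:ℝ) ≤ i := by exact_mod_cast hi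
    linarith
  have hLM : L ≤ M := by
    rw [hLd, hMd]; apply Real.log_le_log (by positivity); linarith
  have hlog := Real.log_le_sub_one_of_pos (div_pos hL hM)
  rw [Real.log_div hL.ne' hM.ne'] at hlog
  have hmf : (mf i - mf (i+1)) * L = 1 - L / M := by
    rw [mf, mf]
    push_cast
    rw [← hLd, ← hMd]
    field_simp
  have hmF : mF (i+1) - mF i = Real.log M - Real.log L := by
    rw [mF, mF, ← hLd, hM']
  rw [hmf, hmF]
  linarith

lemma key2 {i : ℕ} (hi : 2 ≤ i) :
    mF (i+1) - mF i ≤ (mf i - mf (i+1)) * Real.log i + (mf i - mf (i+1)) := by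
  set L := Real.log i with hLd
  have hM' : Real.log ((i:ℕ)+1 : ℕ) = Real.log ((i:ℝ)+1) := by push_cast; rfl
  set M := Real.log ((i:ℝ)+1) with hMd
  have hir : (2:ℝ) ≤ (i:ℝ) := by exact_mod_cast hi
  have hL : 0 < L := log_pos_of_two hi
  have hM : 0 < M := by
    rw [hMd]
    apply Real.log_pos
    linarith
  have hLM : L ≤ M := by
    rw [hLd, hMd]; apply Real.log_le_log (by positivity); linarith
  have hd1 : M - L ≤ 1 := by
    have h := Real.log_le_sub_one_of_pos (x := ((i:ℝ)+1)/i) (by positivity)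
    rw [Real.log_div (by linarith) (by linarith)] at h
    have : ((i:ℝ)+1)/i - 1 = 1/i := by field_simp; ring
    rw [this] at h
    have : (1:ℝ)/i ≤ 1 := by rw [div_le_one (by linarith)]; linarith
    rw [hMd, hLd]
    linarith
  have hT : mF (i+1) - mF i ≤ (M - L)/L := by
    have hmF : mF (i+1) - mF i = Real.log M - Real.log L := by
      rw [mF, mF, ← hLd, hM']
    have h := Real.log_le_sub_one_of_pos (div_pos hM hL)
    rw [Real.log_div hM.ne' hL.ne'] at h
    have : M/L - 1 = (M - L)/L := by field_simp
    rw [hmF]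
    linarith
  have hfd : mf i - mf (i+1) = 1/L - 1/M := by
    rw [mf, mf]
    push_cast
    rw [← hLd, ← hMd, one_div, one_div]
  have ht : (mf i - mf (i+1)) * L = (M - L)/M := by
    rw [hfd]
    field_simp
  have hiden : (M - L)/L = (M - L)/M + (M - L) * (1/L - 1/M) := by
    field_simp
    ring
  have hlast : (M - L) * (1/L - 1/M) ≤ 1/L - 1/M := by
    have hnn : 0 ≤ 1/L - 1/M := by
      rw [sub_nonneg, one_div, one_div]
      exact inv_anti₀ hL hLM
    nlinarith [hnn, hd1, sub_nonneg.mpr hLM]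
  rw [ht, hfd]
  linarith [hT, hiden, hlast]

noncomputable def MC2 : ℝ := (2*MC1 + 1)/Real.log 2 + 1 + |Real.log (Real.log 2)|

lemma mertens2 (N : ℕ) (hN : 2 ≤ N) :
    |(∑ p ∈ (Finset.range (N+1)).filter Nat.Prime, 1/(p:ℝ)) - mF N| ≤ MC2 := by
  have hlog2 : 0 < Real.log 2 := Real.log_pos one_lt_two
  have hS : (∑ p ∈ (Finset.range (N+1)).filter Nat.Prime, 1/(p:ℝ))
      = ∑ i ∈ Finset.range (N+1), mf i * ma i := by
    rw [Finset.sum_filter]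
    refine Finset.sum_congr rfl fun i _ => ?_
    by_cases hp : i.Prime
    · have hl : Real.log i ≠ 0 := (log_pos_of_two hp.two_le).ne'
      simp only [hp, if_true, mf, ma]
      field_simp
    · simp [mf, ma, hp]
  have habel := Finset.sum_range_by_parts mf ma (N+1)
  simp only [smul_eq_mul, Nat.add_sub_cancel] at habel
  have hA' : ∀ i : ℕ, (∑ j ∈ Finset.range (i+1), ma j) = mA i := fun i => rfl
  simp only [hA'] at habel
  have hA0 : mA 0 = 0 := by
    simp [mA, ma, Finset.sum_range_succ, Nat.not_prime_zero]
  have hA1 : mA 1 = 0 := by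
    simp [mA, ma, Finset.sum_range_succ, Nat.not_prime_zero, Nat.not_prime_one]
  have hsplit : ∑ i ∈ Finset.range N, (mf (i+1) - mf i) * mA i
      = ∑ i ∈ Finset.Ico 2 N, (mf (i+1) - mf i) * mA i := by
    refine (Finset.sum_subset ?_ ?_).symm
    · intro i hi
      rw [Finset.mem_Ico] at hi
      exact Finset.mem_range.mpr hi.2
    · intro i hir hino
      rw [Finset.mem_range] at hir
      rw [Finset.mem_Ico] at hino
      have : i = 0 ∨ i = 1 := by omega
      rcases this with h | h <;> subst h <;> simp [hA0, hA1]
  have hdecomp : ∑ i ∈ Finset.Ico 2 N, (mf (i+1) - mf i) * mA i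
      = -(∑ i ∈ Finset.Ico 2 N, (mf i - mf (i+1)) * Real.log i)
        - ∑ i ∈ Finset.Ico 2 N, (mf i - mf (i+1)) * (mA i - Real.log i) := by
    rw [← Finset.sum_neg_distrib, ← Finset.sum_sub_distrib]
    exact Finset.sum_congr rfl fun i _ => by ring
  set G1 := ∑ i ∈ Finset.Ico 2 N, (mf i - mf (i+1)) * Real.log i with hG1d
  set G2 := ∑ i ∈ Finset.Ico 2 N, (mf i - mf (i+1)) * (mA i - Real.log i) with hG2d
  have htel1 : ∑ i ∈ Finset.Ico 2 N, (mF (i+1) - mF i) = mF N - mF 2 := tele mF hN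
  have htel2 : ∑ i ∈ Finset.Ico 2 N, (mf i - mf (i+1)) = mf 2 - mf N := by
    have h1 := tele mf hN
    have h2 : ∑ i ∈ Finset.Ico 2 N, (mf i - mf (i+1))
        = -∑ i ∈ Finset.Ico 2 N, (mf (i+1) - mf i) := by
      rw [← Finset.sum_neg_distrib]
      exact Finset.sum_congr rfl fun i _ => by ring
    rw [h2, h1]; ring
  have hmem : ∀ i ∈ Finset.Ico 2 N, 2 ≤ i := fun i hi => (Finset.mem_Ico.mp hi).1
  have hG1u : G1 ≤ mF N - mF 2 := by
    rw [← htel1, hG1d]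
    exact Finset.sum_le_sum fun i hi => key1 (hmem i hi)
  have hG1l : mF N - mF 2 - (mf 2 - mf N) ≤ G1 := by
    have h := Finset.sum_le_sum fun i hi => key2 (hmem i hi)
    rw [Finset.sum_add_distrib, htel2] at h
    rw [htel1] at h
    linarith
  have hG2 : |G2| ≤ MC1 * (mf 2 - mf N) := by
    calc |G2| ≤ ∑ i ∈ Finset.Ico 2 N, |(mf i - mf (i+1)) * (mA i - Real.log i)| :=
          Finset.abs_sum_le_sum_abs _ _
      _ ≤ ∑ i ∈ Finset.Ico 2 N, (mf i - mf (i+1)) * MC1 := by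
          refine Finset.sum_le_sum fun i hi => ?_
          have h2 := hmem i hi
          rw [abs_mul, abs_of_nonneg (mf_facts h2).1]
          exact mul_le_mul_of_nonneg_left (mE_bound h2) (mf_facts h2).1
      _ = MC1 * (mf 2 - mf N) := by rw [← Finset.sum_mul, htel2]; ring
  have hfN0 : 0 ≤ mf N := by
    rw [mf]
    have : 0 ≤ Real.log N := Real.log_nonneg (by exact_mod_cast Nat.one_le_of_lt hN)
    positivity
  have hmf2 : mf 2 = (Real.log 2)⁻¹ := by rw [mf]; norm_num
  have hf2N1 : mf 2 - mf N ≤ (Real.log 2)⁻¹ := by rw [hmf2] at *; linarith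
  have hf2N0 : 0 ≤ mf 2 - mf N := by
    have := (mf_facts hN).2
    rw [hmf2]; linarith
  have hB : |mf N * mA N - 1| ≤ MC1 * (Real.log 2)⁻¹ := by
    have hlogN : Real.log N ≠ 0 := (log_pos_of_two hN).ne'
    have h1 : mf N * mA N - 1 = mf N * (mA N - Real.log N) := by
      rw [mul_sub, mf, inv_mul_cancel₀ hlogN]
    rw [h1, abs_mul, abs_of_nonneg hfN0]
    calc mf N * |mA N - Real.log N| ≤ (Real.log 2)⁻¹ * MC1 :=
          mul_le_mul (mf_facts hN).2 (mE_bound hN) (abs_nonneg _) (by positivity)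
      _ = MC1 * (Real.log 2)⁻¹ := mul_comm _ _
  rw [hS, habel, hsplit, hdecomp]
  have hmF2 : mF 2 = Real.log (Real.log 2) := by rw [mF]; norm_num
  obtain ⟨hG2a, hG2b⟩ := abs_le.mp hG2
  obtain ⟨hBa, hBb⟩ := abs_le.mp hB
  have hC : MC1 * (mf 2 - mf N) ≤ MC1 * (Real.log 2)⁻¹ :=
    mul_le_mul_of_nonneg_left hf2N1 MC1_nonneg
  have e1 : MC2 = (2*MC1+1) * (Real.log 2)⁻¹ + 1 + |Real.log (Real.log 2)| := by
    rw [MC2, div_eq_mul_inv]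
  have e2 : (2*MC1+1) * (Real.log 2)⁻¹
      = MC1 * (Real.log 2)⁻¹ + MC1 * (Real.log 2)⁻¹ + (Real.log 2)⁻¹ := by ring
  have labs1 := le_abs_self (Real.log (Real.log 2))
  have labs2 := neg_abs_le (Real.log (Real.log 2))
  have hinv : (0:ℝ) ≤ (Real.log 2)⁻¹ := by positivity
  rw [abs_le]
  constructor <;> [skip; skip] <;> rw [e1] <;> rw [e2] <;> rw [hmF2] at hG1u hG1l <;> linarith

lemma chiFour_two : chiFour 2 = 0 := by norm_num [chiFour]

lemma chiFour_odd {p : ℕ} (hp : p.Prime) (h2 : p ≠ 2) : chiFour p = 1 ∨ chiFour p = -1 := by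
  have hodd : p % 2 = 1 := Nat.odd_iff.mp (hp.odd_of_ne_two h2)
  have h4 : p % 4 % 2 = p % 2 := Nat.mod_mod_of_dvd p (by norm_num)
  have : p % 4 = 1 ∨ p % 4 = 3 := by omega
  rcases this with h | h
  · left; simp [chiFour, h]
  · right; simp [chiFour, h]

lemma taylor {p : ℕ} (hp : p.Prime) :
    |Real.log (1 - chiFour p / Real.sqrt p)⁻¹ - chiFour p / Real.sqrt p
        - (chiFour p)^2 / (2*p)|
      ≤ 3 * (1 / (p:ℝ) ^ ((3:ℝ)/2)) := by
  by_cases h2 : p = 2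
  · subst h2
    rw [chiFour_two]
    simp only [zero_div, sub_zero, ne_eq, zero_pow, OfNat.ofNat_ne_zero,
      not_false_eq_true, sub_zero]
    norm_num
    positivity
  · have hp3 : 3 ≤ p := by have := hp.two_le; omega
    have hpr : (3:ℝ) ≤ p := by exact_mod_cast hp3
    have hsp : 0 < Real.sqrt p := Real.sqrt_pos.mpr (by linarith)
    have hsp32 : (3:ℝ)/2 ≤ Real.sqrt p := by
      rw [show (3:ℝ)/2 = Real.sqrt ((3/2)^2) by rw [Real.sqrt_sq (by norm_num)]]
      apply Real.sqrt_le_sqrt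
      nlinarith
    have hc : chiFour p = 1 ∨ chiFour p = -1 := chiFour_odd hp h2
    have hcabs : |chiFour p| = 1 := by rcases hc with h | h <;> simp [h]
    set t := chiFour p / Real.sqrt p with htd
    have habs : |t| = 1 / Real.sqrt p := by
      rw [htd, abs_div, hcabs, abs_of_pos hsp]
    have htlt : |t| < 1 := by
      rw [habs, div_lt_one hsp]; linarith
    have hkey := Real.abs_log_sub_add_sum_range_le htlt 2
    have hsum : (∑ i ∈ Finset.range 2, t^(i+1)/((i:ℝ)+1)) = t + t^2/2 := by
      rw [Finset.sum_range_succ, Finset.sum_range_succ, Finset.sum_range_zero]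
      norm_num
    rw [hsum] at hkey
    have ht2 : t^2 = (chiFour p)^2 / p := by
      rw [htd, div_pow, Real.sq_sqrt (by positivity)]
    have hexpr : Real.log (1 - t)⁻¹ - t - (chiFour p)^2/(2*p)
        = -((t + t^2/2) + Real.log (1 - t)) := by
      rw [Real.log_inv, ht2]; ring
    rw [hexpr, abs_neg]
    refine hkey.trans ?_
    rw [habs, rpow_32]
    have h1 : ((1:ℝ)/Real.sqrt p)^(2+1) = 1/((p:ℝ)*Real.sqrt p) := by
      rw [div_pow, one_pow]
      congr 1
      rw [pow_succ, Real.sq_sqrt (by positivity)]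
    have h2' : (1:ℝ)/3 ≤ 1 - 1/Real.sqrt p := by
      have : (1:ℝ)/Real.sqrt p ≤ 2/3 := by
        rw [div_le_div_iff₀ hsp (by norm_num)]; linarith
      linarith
    rw [h1]
    have hX : (0:ℝ) ≤ 1/((p:ℝ)*Real.sqrt p) := by positivity
    calc 1/((p:ℝ)*Real.sqrt p) / (1 - 1/Real.sqrt p)
        ≤ 1/((p:ℝ)*Real.sqrt p) / (1/3) :=
          div_le_div_of_nonneg_left hX (by norm_num) h2'
      _ = 3 * (1/((p:ℝ)*Real.sqrt p)) := by ring

lemma loglog_close {x : ℝ} (hx : 3 ≤ x) :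
    |Real.log (Real.log x) - mF ⌊x⌋₊| ≤ 1 := by
  set N := ⌊x⌋₊ with hNd
  have hN3 : 3 ≤ N := Nat.le_floor (by exact_mod_cast hx)
  have hNr : (3:ℝ) ≤ N := by exact_mod_cast hN3
  have hNx : (N:ℝ) ≤ x := Nat.floor_le (by linarith)
  have hxN : x ≤ (N:ℝ)^2 := by
    have := (Nat.lt_floor_add_one x).le
    nlinarith
  have hlogN : 1 < Real.log N := by
    have h3 : Real.log 3 ≤ Real.log N := Real.log_le_log (by norm_num) hNr
    have : Real.log 3 > 1 := by
      rw [show (1:ℝ) = Real.log (Real.exp 1) by rw [Real.log_exp]]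
      apply Real.log_lt_log (Real.exp_pos 1)
      have := Real.exp_one_lt_d9
      linarith
    linarith
  have hlx1 : Real.log N ≤ Real.log x := Real.log_le_log (by linarith) hNx
  have hlx2 : Real.log x ≤ 2 * Real.log N := by
    have := Real.log_le_log (by linarith) hxN
    rwa [Real.log_pow, Nat.cast_ofNat] at this
  have hll1 : mF N ≤ Real.log (Real.log x) := Real.log_le_log (by linarith) hlx1
  have hll2 : Real.log (Real.log x) ≤ Real.log 2 + mF N := by
    have h := Real.log_le_log (by linarith) hlx2
    rwa [Real.log_mul (by norm_num) (by linarith)] at h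
  have hlog2 : Real.log 2 ≤ 1 := by
    have := Real.log_le_sub_one_of_pos (show (0:ℝ) < 2 by norm_num)
    linarith
  rw [abs_le]
  constructor <;> linarith

theorem stmt_3
    (hDRH : ∃ C : ℝ, ∀ x : ℝ, 2 ≤ x →
      |∑ p ∈ (Finset.range (⌊x⌋₊ + 1)).filter Nat.Prime,
        Real.log (1 - chiFour p / Real.sqrt p)⁻¹| ≤ C) :
    ∃ C : ℝ, ∀ x : ℝ, 3 ≤ x →
      |(∑ p ∈ (Finset.range (⌊x⌋₊ + 1)).filter Nat.Prime, chiFour p / Real.sqrt p) +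
        (1 / 2) * Real.log (Real.log x)| ≤ C := by
  obtain ⟨CD, hCD⟩ := hDRH
  refine ⟨CD + 3*Tsum + 1/4 + MC2/2 + 1/2, fun x hx => ?_⟩
  have hL := hCD x (by linarith)
  set N := ⌊x⌋₊ with hNd
  have hN3 : 3 ≤ N := Nat.le_floor (by exact_mod_cast hx)
  have hN2 : 2 ≤ N := by omega
  set P := (Finset.range (N+1)).filter Nat.Prime with hPd
  have htaylor : |(∑ p ∈ P, Real.log (1 - chiFour p / Real.sqrt p)⁻¹)
      - (∑ p ∈ P, chiFour p / Real.sqrt p) - ∑ p ∈ P, (chiFour p)^2/(2*(p:ℝ))|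
      ≤ 3 * Tsum := by
    rw [← Finset.sum_sub_distrib, ← Finset.sum_sub_distrib]
    calc |∑ p ∈ P, (Real.log (1 - chiFour p / Real.sqrt p)⁻¹
            - chiFour p / Real.sqrt p - (chiFour p)^2/(2*(p:ℝ)))|
        ≤ ∑ p ∈ P, |Real.log (1 - chiFour p / Real.sqrt p)⁻¹
            - chiFour p / Real.sqrt p - (chiFour p)^2/(2*(p:ℝ))| :=
          Finset.abs_sum_le_sum_abs _ _
      _ ≤ ∑ p ∈ P, 3 * (1/(p:ℝ)^((3:ℝ)/2)) :=
          Finset.sum_le_sum fun p hp => taylor (Finset.mem_filter.mp hp).2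
      _ = 3 * ∑ p ∈ P, (1/(p:ℝ)^((3:ℝ)/2)) := (Finset.mul_sum _ _ _).symm
      _ ≤ 3 * Tsum := by nlinarith [sum_rfunc_le P]
  have hQ : |(∑ p ∈ P, (chiFour p)^2/(2*(p:ℝ))) - (1/2) * ∑ p ∈ P, 1/(p:ℝ)| ≤ 1/4 := by
    have hterm : ∀ p ∈ P, (chiFour p)^2/(2*(p:ℝ)) - (1/2)*(1/(p:ℝ))
        = if p = 2 then -(1/4 : ℝ) else 0 := by
      intro p hp
      have hpp := (Finset.mem_filter.mp hp).2
      by_cases h2 : p = 2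
      · subst h2; rw [chiFour_two]; norm_num
      · have hc2 : (chiFour p)^2 = 1 := by
          rcases chiFour_odd hpp h2 with h | h <;> rw [h] <;> norm_num
        have hp0 : (p:ℝ) ≠ 0 := by exact_mod_cast hpp.pos.ne'
        rw [hc2, if_neg h2]
        field_simp; ring
      
    rw [Finset.mul_sum, ← Finset.sum_sub_distrib,
      Finset.sum_congr rfl hterm, Finset.sum_ite_eq' P 2 (fun _ => -(1/4:ℝ))]
    split <;> rw [abs_le] <;> norm_num
  have hH := mertens2 N hN2
  rw [← hPd] at hH
  have hLL := loglog_close hx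
  rw [← hNd] at hLL
  obtain ⟨ht1, ht2⟩ := abs_le.mp htaylor
  obtain ⟨hq1, hq2⟩ := abs_le.mp hQ
  obtain ⟨hh1, hh2⟩ := abs_le.mp hH
  obtain ⟨hl1, hl2⟩ := abs_le.mp hLL
  obtain ⟨hd1, hd2⟩ := abs_le.mp hL
  rw [abs_le]
  constructor <;> linarith
end

section
/- Let M assign to each prime p a unitary matrix of degree r, and suppose: (i) the partial sums of log of the finite Euler products, ∑_{p ≤ x} log det(1 − M(p)p^{-1/2})^{-1}, are O(1) as x → ∞; (ii) (1/2)∑_{p ≤ x} tr(M(p)²)/p divided by log log x tends to δ/2 for a real constant δ. Then ∑_{p ≤ x} tr(M(p))/√p divided by log log x tends to −δ/2 as x → ∞. -/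
open Polynomial Matrix

lemma charpoly_eval' {r : ℕ} (U : Matrix (Fin r) (Fin r) ℂ) (t : ℂ) :
    U.charpoly.eval t = (t • (1 : Matrix (Fin r) (Fin r) ℂ) - U).det := by
  rw [Matrix.charpoly, eval_det, matPolyEquiv_charmatrix]
  simp [Matrix.scalar, smul_eq_diagonal_mul]
  congr 1

-- roots of charpoly of unitary have norm 1
lemma norm_root_eq_one {r : ℕ} {U : Matrix (Fin r) (Fin r) ℂ}
    (hU : U ∈ Matrix.unitaryGroup (Fin r) ℂ) {a : ℂ}
    (ha : a ∈ U.charpoly.roots) : ‖a‖ = 1 := by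
  have hroot : U.charpoly.eval a = 0 := by
    have := Polynomial.isRoot_of_mem_roots ha
    exact this
  rw [charpoly_eval'] at hroot
  obtain ⟨v, hv0, hv⟩ := (Matrix.exists_mulVec_eq_zero_iff).2 hroot
  have hUv : U.mulVec v = a • v := by
    have h1 : (a • (1 : Matrix (Fin r) (Fin r) ℂ)).mulVec v - U.mulVec v = 0 := by
      rw [← Matrix.sub_mulVec]; exact hv
    have h2 : (a • (1 : Matrix (Fin r) (Fin r) ℂ)).mulVec v = a • v := by
      simp [Matrix.smul_mulVec]
    rw [h2] at h1
    linear_combination (norm := module) -h1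
  have hstar : star U * U = 1 := Matrix.mem_unitaryGroup_iff'.1 hU
  have key : star (U.mulVec v) ⬝ᵥ (U.mulVec v) = star v ⬝ᵥ v := by
    rw [Matrix.star_mulVec, Matrix.dotProduct_mulVec, Matrix.vecMul_vecMul, ← Matrix.star_eq_conjTranspose, hstar]
    simp
  rw [hUv] at key
  have : (starRingEnd ℂ a * a) * (star v ⬝ᵥ v) = star v ⬝ᵥ v := by
    simpa [smul_dotProduct, dotProduct_smul, star_smul, smul_eq_mul, mul_assoc,
      mul_comm, mul_left_comm] using key
  have hvv : (star v ⬝ᵥ v) ≠ 0 := by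
    open scoped ComplexOrder in
    exact fun h => hv0 ((dotProduct_star_self_eq_zero).1 h)
  have hconj : starRingEnd ℂ a * a = 1 := by
    apply mul_right_cancel₀ hvv
    rw [this, one_mul]
  have hns : ((Complex.normSq a : ℂ)) = 1 := by
    rw [Complex.normSq_eq_conj_mul_self]; exact hconj
  have : Complex.normSq a = 1 := by exact_mod_cast hns
  have : ‖a‖ = 1 := by
    rw [Complex.normSq_eq_norm_sq] at this
    nlinarith [norm_nonneg a]
  simpa using this

lemma eig_multiset {r : ℕ} (U : Matrix (Fin r) (Fin r) ℂ)
    (hU : U ∈ Matrix.unitaryGroup (Fin r) ℂ) :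
    ∃ l : Multiset ℂ, l.card = r ∧ (∀ a ∈ l, ‖a‖ = 1) ∧
      U.trace = l.sum ∧ (U ^ 2).trace = (l.map (fun a => a ^ 2)).sum ∧
      ∀ z : ℂ, (1 - z • U).det = (l.map (fun a => 1 - z * a)).prod := by
  set l := U.charpoly.roots with hl
  have hsplits : U.charpoly.Splits := IsAlgClosed.splits _
  have hcard : l.card = r := by
    rw [hl, (Polynomial.splits_iff_card_roots).1 hsplits, Matrix.charpoly_natDegree_eq_dim,
      Fintype.card_fin]
  have hprod : U.charpoly = (l.map (fun a => Polynomial.X - Polynomial.C a)).prod :=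
    hsplits.eq_prod_roots_of_monic U.charpoly_monic
  have evalprod : ∀ t : ℂ, U.charpoly.eval t = (l.map (fun a => t - a)).prod := by
    intro t
    rw [hprod, Polynomial.eval_multiset_prod, Multiset.map_map]
    congr 1
    apply Multiset.map_congr rfl
    intro a _
    simp
  have detprod : ∀ t : ℂ, (t • (1 : Matrix (Fin r) (Fin r) ℂ) - U).det
      = (l.map (fun a => t - a)).prod := by
    intro t; rw [← charpoly_eval', evalprod]
  refine ⟨l, hcard, fun a ha => norm_root_eq_one hU ha, ?_, ?_, ?_⟩
  · exact Matrix.trace_eq_sum_roots_charpoly U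
  · -- trace of square
    have hq : (U ^ 2).charpoly = ((l.map (fun a => a ^ 2)).map
        (fun b => Polynomial.X - Polynomial.C b)).prod := by
      apply Polynomial.funext
      intro y
      obtain ⟨x, hx⟩ := IsAlgClosed.exists_pow_nat_eq y two_pos
      rw [charpoly_eval']
      have hfac : y • (1 : Matrix (Fin r) (Fin r) ℂ) - U ^ 2
          = (x • 1 - U) * (x • 1 + U) := by
        rw [← hx]
        rw [Matrix.sub_mul, Matrix.mul_add, Matrix.mul_add]
        rw [Matrix.smul_mul, Matrix.mul_smul, Matrix.smul_mul]
        simp [smul_smul, pow_two]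
        abel
      rw [hfac, Matrix.det_mul, detprod]
      have h2 : (x • (1 : Matrix (Fin r) (Fin r) ℂ) + U).det
          = (l.map (fun a => x + a)).prod := by
        have : x • (1 : Matrix (Fin r) (Fin r) ℂ) + U = -((-x) • 1 - U) := by
          rw [neg_sub, neg_smul]; abel
        rw [this, Matrix.det_neg, detprod, Fintype.card_fin]
        have : (l.map (fun a => x + a)).prod
            = (l.map (fun a => (-1 : ℂ) * (-x - a))).prod := by
          congr 1; apply Multiset.map_congr rfl; intro a _; ring
        rw [this]
        have := Multiset.prod_map_mul (m := l) (f := fun _ : ℂ => (-1 : ℂ))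
          (g := fun a => -x - a)
        rw [this, Multiset.map_const', Multiset.prod_replicate, hcard]
      rw [h2, ← Multiset.prod_map_mul (m := l) (f := fun a => x - a) (g := fun a => x + a)]
      rw [Polynomial.eval_multiset_prod, Multiset.map_map, Multiset.map_map]
      congr 1
      apply Multiset.map_congr rfl
      intro a _
      simp only [Function.comp_apply, Polynomial.eval_sub, Polynomial.eval_X, Polynomial.eval_C]
      rw [← hx]; ring
    rw [Matrix.trace_eq_sum_roots_charpoly, hq, Polynomial.roots_multiset_prod_X_sub_C]
  · intro z
    rcases eq_or_ne z 0 with rfl | hz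
    · simp
    · have : (1 : Matrix (Fin r) (Fin r) ℂ) - z • U = z • (z⁻¹ • 1 - U) := by
        rw [smul_sub, smul_smul, mul_inv_cancel₀ hz, one_smul]
      rw [this, Matrix.det_smul, Fintype.card_fin, detprod]
      have : (l.map (fun a => 1 - z * a)).prod
          = (l.map (fun a => z * (z⁻¹ - a))).prod := by
        congr 1; apply Multiset.map_congr rfl; intro a _
        field_simp
      rw [this, Multiset.prod_map_mul (m := l) (f := fun _ : ℂ => z) (g := fun a => z⁻¹ - a),
        Multiset.map_const', Multiset.prod_replicate, hcard]

lemma multiset_exp_sum (s : Multiset ℂ) : Complex.exp s.sum = (s.map Complex.exp).prod := by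
  induction s using Multiset.induction_on with
  | empty => simp
  | cons a s ih => simp [Complex.exp_add, ih]

lemma multiset_sum_le_card_mul {s : Multiset ℂ} {f : ℂ → ℝ} {c : ℝ}
    (h : ∀ a ∈ s, f a ≤ c) : (s.map f).sum ≤ s.card * c := by
  induction s using Multiset.induction_on with
  | empty => simp
  | cons a s ih =>
    simp only [Multiset.map_cons, Multiset.sum_cons, Multiset.card_cons]
    have h1 := h a (Multiset.mem_cons_self a s)
    have h2 := ih (fun b hb => h b (Multiset.mem_cons_of_mem hb))
    push_cast
    linarith

lemma multiset_sum_map_sub (s : Multiset ℂ) (f g : ℂ → ℂ) :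
    (s.map (fun a => f a - g a)).sum = (s.map f).sum - (s.map g).sum := by
  induction s using Multiset.induction_on with
  | empty => simp
  | cons a s ih => simp only [Multiset.map_cons, Multiset.sum_cons, ih]; ring

lemma multiset_G_sum (z : ℂ) (l : Multiset ℂ) :
    l.sum * z + (l.map (fun a => a ^ 2)).sum * z ^ 2 / 2
      = (l.map (fun a => a * z + a ^ 2 * z ^ 2 / 2)).sum := by
  induction l using Multiset.induction_on with
  | empty => simp
  | cons b t ih =>
    simp only [Multiset.map_cons, Multiset.sum_cons, ← ih]
    ring

lemma key {r : ℕ} {U : Matrix (Fin r) (Fin r) ℂ} (hU : U ∈ Matrix.unitaryGroup (Fin r) ℂ)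
    {z : ℂ} (hz : ‖z‖ ≤ 1 / (2 * (r + 1))) :
    ‖Complex.log ((1 - z • U).det)⁻¹ - (U.trace * z + (U ^ 2).trace * z ^ 2 / 2)‖
      ≤ r * ‖z‖ ^ 3 := by
  obtain ⟨l, hcard, hnorm, htr, htr2, hdet⟩ := eig_multiset U hU
  have hrpos : (0:ℝ) < 2 * (r + 1) := by positivity
  have hz2 : ‖z‖ ≤ 1 / 2 := by
    refine hz.trans ?_
    rw [div_le_div_iff₀ hrpos (by norm_num)]
    nlinarith [Nat.cast_nonneg (α := ℝ) r]
  have hz1 : ‖z‖ < 1 := lt_of_le_of_lt hz2 (by norm_num)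
  have hza : ∀ a ∈ l, ‖-(z * a)‖ = ‖z‖ := by
    intro a ha; rw [norm_neg, norm_mul, hnorm a ha, mul_one]
  have hne : ∀ a ∈ l, (1 : ℂ) - z * a ≠ 0 := by
    intro a ha h
    have : ‖(1:ℂ)‖ = ‖z * a‖ := by
      rw [show (z * a) = 1 - (1 - z * a) by ring, h]; simp
    rw [norm_one, norm_mul, hnorm a ha, mul_one] at this
    exact absurd this.symm (ne_of_lt hz1)
  set g : ℂ := (l.map (fun a => -Complex.log (1 - z * a))).sum with hg
  have hexp : Complex.exp g = ((1 - z • U).det)⁻¹ := by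
    rw [hg, multiset_exp_sum, Multiset.map_map, hdet z, ← Multiset.prod_map_inv]
    apply congrArg
    apply Multiset.map_congr rfl
    intro a ha
    simp only [Function.comp_apply]
    rw [Complex.exp_neg, Complex.exp_log (hne a ha)]
  have hlognorm : ∀ a ∈ l, ‖Complex.log (1 - z * a)‖ ≤ (3/2) * ‖z‖ := by
    intro a ha
    have h1 : (1 : ℂ) - z * a = 1 + (-(z * a)) := by ring
    rw [h1]
    have := Complex.norm_log_one_add_half_le_self (z := -(z * a)) (by rw [hza a ha]; exact hz2)
    rwa [hza a ha] at this
  have hgnorm : ‖g‖ ≤ r * ((3/2) * ‖z‖) := by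
    refine le_trans (norm_multiset_sum_le _) ?_
    rw [Multiset.map_map]
    have := multiset_sum_le_card_mul (s := l)
      (f := norm ∘ fun a => -Complex.log (1 - z * a)) (c := (3/2) * ‖z‖) ?_
    · rwa [hcard] at this
    · intro a ha
      simp only [Function.comp_apply, norm_neg]
      exact hlognorm a ha
  have hgsmall : ‖g‖ < 1 := by
    refine lt_of_le_of_lt hgnorm ?_
    calc (r : ℝ) * ((3/2) * ‖z‖) ≤ r * ((3/2) * (1 / (2 * (r+1)))) := by
          gcongr
      _ = 3 * r / (4 * (r + 1)) := by field_simp; ring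
      _ < 1 := by
          rw [div_lt_one (by positivity)]
          have : (0:ℝ) ≤ (r:ℝ) := Nat.cast_nonneg r
          linarith
  have hgim : Complex.log ((1 - z • U).det)⁻¹ = g := by
    rw [← hexp, Complex.log_exp]
    · have h1 : |g.im| ≤ ‖g‖ := Complex.abs_im_le_norm g
      have := Real.pi_gt_three
      have h2 : |g.im| < 1 := lt_of_le_of_lt h1 hgsmall
      rw [abs_lt] at h2
      linarith [h2.1]
    · have h1 : |g.im| ≤ ‖g‖ := Complex.abs_im_le_norm g
      have := Real.pi_gt_three
      have h2 : |g.im| < 1 := lt_of_le_of_lt h1 hgsmall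
      rw [abs_lt] at h2
      linarith [h2.2]
  rw [hgim, htr, htr2]
  rw [multiset_G_sum z l, hg, ← multiset_sum_map_sub]
  have hterm : ∀ a ∈ l, ‖-Complex.log (1 - z * a) - (a * z + a ^ 2 * z ^ 2 / 2)‖ ≤ ‖z‖ ^ 3 := by
    intro a ha
    have hw : ‖-(z * a)‖ = ‖z‖ := hza a ha
    have hwlt : ‖-(z * a)‖ < 1 := by rw [hw]; exact hz1
    have htay := Complex.norm_log_sub_logTaylor_le 2 hwlt
    have hlt3 : Complex.logTaylor 3 (-(z * a)) = -(z * a) - (-(z * a)) ^ 2 / 2 := by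
      simp [Complex.logTaylor, Finset.sum_range_succ]
      ring
    have heq : Complex.log (1 + -(z * a)) - Complex.logTaylor 3 (-(z * a))
        = -(-Complex.log (1 - z * a) - (a * z + a ^ 2 * z ^ 2 / 2)) := by
      rw [hlt3]
      have : (1 : ℂ) + -(z * a) = 1 - z * a := by ring
      rw [this]
      ring
    rw [heq, norm_neg, hw] at htay
    refine htay.trans ?_
    have hinv : (1 - ‖z‖)⁻¹ ≤ 2 := by
      rw [inv_le_comm₀ (by linarith) (by norm_num)]
      linarith
    calc ‖z‖ ^ (2+1) * (1 - ‖z‖)⁻¹ / (2+1) ≤ ‖z‖ ^ 3 * 2 / 3 := by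
          gcongr
          norm_num
      _ ≤ ‖z‖ ^ 3 := by
          have : (0:ℝ) ≤ ‖z‖ ^ 3 := by positivity
          linarith
  refine le_trans (norm_multiset_sum_le _) ?_
  rw [Multiset.map_map]
  have := multiset_sum_le_card_mul (s := l)
    (f := norm ∘ fun a => -Complex.log (1 - z * a) - (a * z + a ^ 2 * z ^ 2 / 2))
    (c := ‖z‖ ^ 3) ?_
  · rwa [hcard] at this
  · intro a ha
    simp only [Function.comp_apply]
    exact hterm a ha


open Filter

noncomputable def Dfull (r : ℕ) (M : ℕ → Matrix (Fin r) (Fin r) ℂ) (n : ℕ) : ℂ :=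
  if n.Prime then
    Complex.log ((1 - (n:ℂ) ^ (-(1/2 : ℂ)) • M n).det)⁻¹
      - (Matrix.trace (M n) / ((Real.sqrt n : ℂ))
        + (1/2 : ℂ) * (Matrix.trace ((M n) ^ 2) / (n:ℂ)))
  else 0

lemma zc_eq (n : ℕ) : (n:ℂ) ^ (-(1/2 : ℂ)) = (((Real.sqrt n)⁻¹ : ℝ) : ℂ) := by
  have h0 : (0:ℝ) ≤ (n:ℝ) := Nat.cast_nonneg n
  have : ((n:ℝ) : ℂ) ^ (((-(1/2) : ℝ)) : ℂ) = (((n:ℝ) ^ (-(1/2) : ℝ) : ℝ) : ℂ) :=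
    (Complex.ofReal_cpow h0 _).symm
  push_cast at this
  rw [this]
  norm_cast
  rw [Real.rpow_neg h0, Real.sqrt_eq_rpow]

lemma Dfull_iden (r : ℕ) (M : ℕ → Matrix (Fin r) (Fin r) ℂ) {p : ℕ} (hp : p.Prime) :
    Complex.log ((1 - (p:ℂ) ^ (-(1/2 : ℂ)) • M p).det)⁻¹
      = Matrix.trace (M p) / ((Real.sqrt p : ℂ))
        + (1/2 : ℂ) * (Matrix.trace ((M p) ^ 2) / (p:ℂ)) + Dfull r M p := by
  rw [Dfull, if_pos hp]; ring

lemma Dfull_bound (r : ℕ) (M : ℕ → Matrix (Fin r) (Fin r) ℂ)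
    (hM : ∀ p : ℕ, p.Prime → M p ∈ Matrix.unitaryGroup (Fin r) ℂ)
    {n : ℕ} (hn : 4 * (r + 1) ^ 2 ≤ n) :
    ‖Dfull r M n‖ ≤ r * (n:ℝ) ^ (-(3/2) : ℝ) := by
  have hnpos : 0 < n := lt_of_lt_of_le (by positivity) hn
  have h0 : (0:ℝ) ≤ (n:ℝ) := Nat.cast_nonneg n
  by_cases hp : n.Prime
  · set z : ℂ := (n:ℂ) ^ (-(1/2 : ℂ)) with hzdef
    have hzre : z = (((Real.sqrt n)⁻¹ : ℝ) : ℂ) := zc_eq n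
    have hsqrtpos : 0 < Real.sqrt n := Real.sqrt_pos.2 (by exact_mod_cast hnpos)
    have hznorm : ‖z‖ = (Real.sqrt n)⁻¹ := by
      rw [hzre, Complex.norm_real, Real.norm_eq_abs, abs_of_nonneg (by positivity)]
    have hsq : (2 * ((r:ℝ) + 1)) ≤ Real.sqrt n := by
      rw [show (2 * ((r:ℝ) + 1)) = Real.sqrt ((2 * (r+1))^2) by
        rw [Real.sqrt_sq (by positivity)]]
      apply Real.sqrt_le_sqrt
      have : ((4 * (r + 1) ^ 2 : ℕ) : ℝ) ≤ (n:ℝ) := by exact_mod_cast hn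
      push_cast at this ⊢
      nlinarith
    have hz : ‖z‖ ≤ 1 / (2 * ((r:ℝ) + 1)) := by
      rw [hznorm, inv_eq_one_div]
      apply div_le_div_of_nonneg_left (by norm_num) (by positivity) hsq
    have hkey := key (hM n hp) hz
    have heq : Dfull r M n
        = Complex.log ((1 - z • M n).det)⁻¹
          - ((M n).trace * z + ((M n) ^ 2).trace * z ^ 2 / 2) := by
      rw [Dfull, if_pos hp, ← hzdef]
      have hzsq : z ^ 2 = ((n:ℝ)⁻¹ : ℝ) := by
        rw [hzre, ← Complex.ofReal_pow, inv_pow, Real.sq_sqrt h0]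
      have h1 : Matrix.trace (M n) / ((Real.sqrt n : ℂ)) = (M n).trace * z := by
        rw [hzre, div_eq_mul_inv, Complex.ofReal_inv]
      have h2 : (1/2 : ℂ) * (Matrix.trace ((M n) ^ 2) / (n:ℂ))
          = ((M n) ^ 2).trace * z ^ 2 / 2 := by
        rw [hzsq]
        push_cast
        ring
      rw [h1, h2]
    rw [heq]
    refine hkey.trans ?_
    have : ‖z‖ ^ 3 = (n:ℝ) ^ (-(3/2) : ℝ) := by
      rw [hznorm, Real.sqrt_eq_rpow, ← Real.rpow_neg_one ((n:ℝ) ^ (1/2 : ℝ)),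
        ← Real.rpow_natCast (((n:ℝ) ^ (1/2:ℝ)) ^ (-1:ℝ)) 3,
        ← Real.rpow_mul h0, ← Real.rpow_mul (by positivity)]
      norm_num
    rw [this]
  · rw [Dfull, if_neg hp, norm_zero]
    positivity

theorem stmt_5 (r : ℕ) (M : ℕ → Matrix (Fin r) (Fin r) ℂ)
    (hM : ∀ p : ℕ, p.Prime → M p ∈ Matrix.unitaryGroup (Fin r) ℂ) (δ : ℝ)
    (hDRH : ∃ C : ℝ, ∀ x : ℝ, 2 ≤ x →
      ‖∑ p ∈ (Finset.range (⌊x⌋₊ + 1)).filter Nat.Prime,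
        Complex.log ((1 - (p : ℂ) ^ (-(1 / 2 : ℂ)) • M p).det)⁻¹‖ ≤ C)
    (hII : Tendsto (fun x : ℝ =>
        ((1 / 2 : ℂ) * ∑ p ∈ (Finset.range (⌊x⌋₊ + 1)).filter Nat.Prime,
          Matrix.trace ((M p) ^ 2) / (p : ℂ)) / (Real.log (Real.log x) : ℂ))
      atTop (nhds ((δ : ℂ) / 2))) :
    Tendsto (fun x : ℝ =>
        (∑ p ∈ (Finset.range (⌊x⌋₊ + 1)).filter Nat.Prime,
          Matrix.trace (M p) / ((Real.sqrt p : ℂ))) / (Real.log (Real.log x) : ℂ))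
      atTop (nhds (-(δ : ℂ) / 2)) := by
  obtain ⟨C, hC⟩ := hDRH
  -- summability of the error terms
  have hsum : Summable (fun n => ‖Dfull r M n‖) := by
    apply Summable.of_norm_bounded_eventually_nat (g := fun n => (r:ℝ) * (n:ℝ) ^ (-(3/2) : ℝ))
    · exact (Real.summable_nat_rpow.mpr (by norm_num)).mul_left _
    · filter_upwards [eventually_ge_atTop (4 * (r + 1) ^ 2)] with n hn
      rw [norm_norm]
      exact Dfull_bound r M hM hn
  set C0 : ℝ := ∑' n, ‖Dfull r M n‖ with hC0
  have hEb : ∀ N : ℕ, ‖∑ n ∈ Finset.range N, Dfull r M n‖ ≤ C0 := by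
    intro N
    refine (norm_sum_le _ _).trans ?_
    exact hsum.sum_le_tsum _ (fun n _ => norm_nonneg _)
  -- notation
  set L : ℝ → ℂ := fun x => (Real.log (Real.log x) : ℂ) with hLdef
  set F : ℝ → ℂ := fun x => ∑ p ∈ (Finset.range (⌊x⌋₊ + 1)).filter Nat.Prime,
      Complex.log ((1 - (p : ℂ) ^ (-(1 / 2 : ℂ)) • M p).det)⁻¹ with hF
  set A : ℝ → ℂ := fun x => ∑ p ∈ (Finset.range (⌊x⌋₊ + 1)).filter Nat.Prime,
      Matrix.trace (M p) / ((Real.sqrt p : ℂ)) with hA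
  set B : ℝ → ℂ := fun x => (1 / 2 : ℂ) * ∑ p ∈ (Finset.range (⌊x⌋₊ + 1)).filter Nat.Prime,
      Matrix.trace ((M p) ^ 2) / (p : ℂ) with hB
  set E : ℝ → ℂ := fun x => ∑ p ∈ (Finset.range (⌊x⌋₊ + 1)).filter Nat.Prime,
      Dfull r M p with hE
  have hsplit : ∀ x : ℝ, F x = A x + B x + E x := by
    intro x
    rw [hF, hA, hB, hE]
    simp only
    rw [Finset.mul_sum, ← Finset.sum_add_distrib, ← Finset.sum_add_distrib]
    apply Finset.sum_congr rfl
    intro p hp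
    have hpp : p.Prime := (Finset.mem_filter.mp hp).2
    exact Dfull_iden r M hpp
  -- limit of log log
  have hL : Tendsto (fun x : ℝ => Real.log (Real.log x)) atTop atTop :=
    Real.tendsto_log_atTop.comp Real.tendsto_log_atTop
  -- F / L → 0
  have hquot : ∀ (G : ℝ → ℂ) (c : ℝ), (∀ x : ℝ, 2 ≤ x → ‖G x‖ ≤ c) →
      Tendsto (fun x => G x / L x) atTop (nhds 0) := by
    intro G c hGc
    apply squeeze_zero_norm' (a := fun x => c / Real.log (Real.log x))
    · filter_upwards [eventually_ge_atTop (2:ℝ), hL.eventually_ge_atTop 1] with x hx2 hx1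
      rw [norm_div, hLdef]
      have hpos : (0:ℝ) < Real.log (Real.log x) := by linarith
      simp only [Complex.norm_real, Real.norm_eq_abs, abs_of_nonneg hpos.le]
      gcongr
      exact hGc x hx2
    · exact Tendsto.div_atTop tendsto_const_nhds hL
  have t1 : Tendsto (fun x => F x / L x) atTop (nhds 0) := hquot F C hC
  have t3 : Tendsto (fun x => E x / L x) atTop (nhds 0) := by
    apply hquot E C0
    intro x _
    rw [hE]
    simp only
    rw [Finset.sum_filter]
    calc ‖∑ n ∈ Finset.range (⌊x⌋₊ + 1), if n.Prime then Dfull r M n else 0‖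
        = ‖∑ n ∈ Finset.range (⌊x⌋₊ + 1), Dfull r M n‖ := by
          congr 1
          apply Finset.sum_congr rfl
          intro n _
          by_cases h : n.Prime
          · rw [if_pos h]
          · rw [if_neg h, Dfull, if_neg h]
      _ ≤ C0 := hEb _
  have t2 : Tendsto (fun x => B x / L x) atTop (nhds ((δ:ℂ) / 2)) := hII
  have hfin : Tendsto (fun x => A x / L x) atTop (nhds (0 - (δ:ℂ)/2 - 0)) := by
    have heqf : (fun x => A x / L x) = fun x => F x / L x - B x / L x - E x / L x := by
      funext x
      rw [← sub_div, ← sub_div]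
      congr 1
      rw [hsplit x]
      ring
    rw [heqf]
    exact (t1.sub t2).sub t3
  convert hfin using 2
  ring
end
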